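/- arXiv:2510.00926 — 3 statements merged into one kernel-verified Lean document; each statement's English description precedes it below -/
import Mathlib

section
/- Let p be an odd prime and let a, b, c ∈ ZMod p be such that D := 18abc − 4a³c + a²b² − 4b³ − 27c² is nonzero. Let n denote the number of elements x ∈ ZMod p with x³ + ax² + bx + c = 0. Then n ∈ {0, 1, 3}, and D is a square in ZMod p if and only if n ≠ 1 (equivalently, D is a non-square in ZMod p if and only if the cubic has exactly one root in ZMod p). -/
open Polynomial

private lemma frob_fixed_mem' (p : ℕ) [Fact p.Prime] {K : Type*} [Field K] [Algebra (ZMod p) K]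
    {u : K} (hu : u ^ p = u) : ∃ x : ZMod p, algebraMap (ZMod p) K x = u := by
  by_contra h
  push_neg at h
  classical
  set ι := algebraMap (ZMod p) K
  have hp1 : 1 < p := (Fact.out : p.Prime).one_lt
  set g : K[X] := X ^ p - X with hg
  have hg0 : g ≠ 0 := FiniteField.X_pow_card_sub_X_ne_zero K hp1
  have hdeg : g.natDegree = p := FiniteField.X_pow_card_sub_X_natDegree_eq K hp1
  set T : Finset K := insert u ((Finset.univ : Finset (ZMod p)).image ι) with hT
  have hsub : T ⊆ g.roots.toFinset := by
    intro v hv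
    rw [Multiset.mem_toFinset, mem_roots hg0]
    simp only [hT, Finset.mem_insert, Finset.mem_image] at hv
    rcases hv with rfl | ⟨x, -, rfl⟩
    · simp [g, IsRoot, hu]
    · simp [g, IsRoot, ← map_pow, ZMod.pow_card]
  have hcardT : T.card = p + 1 := by
    rw [hT, Finset.card_insert_of_notMem
        (by simp only [Finset.mem_image]; rintro ⟨x, -, hx⟩; exact h x hx),
      Finset.card_image_of_injective _ (algebraMap (ZMod p) K).injective]
    simp [ZMod.card]
  have := (Finset.card_le_card hsub).trans
    ((Multiset.toFinset_card_le _).trans ((Polynomial.card_roots' g).trans_eq hdeg))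
  omega

/-- Let `p` be an odd prime and `a b c : ZMod p` with nonzero cubic discriminant
`D = 18abc − 4a³c + a²b² − 4b³ − 27c²`. Then the number `n` of roots of
`x³ + ax² + bx + c` in `ZMod p` lies in `{0, 1, 3}`, and `D` is a square in `ZMod p`
if and only if `n ≠ 1`. -/
theorem cubic_root_count_and_discriminant_square (p : ℕ) (hp : p.Prime) (hodd : p ≠ 2)
    (a b c : ZMod p)
    (hD : 18 * a * b * c - 4 * a ^ 3 * c + a ^ 2 * b ^ 2 - 4 * b ^ 3 - 27 * c ^ 2 ≠ 0) :
    Nat.card {x : ZMod p // x ^ 3 + a * x ^ 2 + b * x + c = 0} ∈ ({0, 1, 3} : Set ℕ) ∧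
    (IsSquare (18 * a * b * c - 4 * a ^ 3 * c + a ^ 2 * b ^ 2 - 4 * b ^ 3 - 27 * c ^ 2) ↔
      Nat.card {x : ZMod p // x ^ 3 + a * x ^ 2 + b * x + c = 0} ≠ 1) := by
  classical
  haveI : Fact p.Prime := ⟨hp⟩
  set D : ZMod p := 18 * a * b * c - 4 * a ^ 3 * c + a ^ 2 * b ^ 2 - 4 * b ^ 3 - 27 * c ^ 2 with hDdef
  set K := AlgebraicClosure (ZMod p)
  set ι : ZMod p →+* K := algebraMap (ZMod p) K with hι
  have hinj : Function.Injective ι := ι.injective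
  haveI hchar : CharP K p := charP_of_injective_algebraMap hinj p
  set P : Cubic (ZMod p) := ⟨1, a, b, c⟩ with hP
  have ha : P.a ≠ 0 := one_ne_zero
  have hsplit : Splits (P.toPoly.map ι) := IsAlgClosed.splits _
  obtain ⟨r, s, t, hroots⟩ := (Cubic.splits_iff_roots_eq_three ha).mp hsplit
  have hdisc : P.discr = D := by simp only [Cubic.discr, hP, hDdef]; ring
  have hdisc0 : P.discr ≠ 0 := by rw [hdisc]; exact hD
  obtain ⟨hrs, hrt, hst⟩ := (Cubic.discr_ne_zero_iff_roots_ne ha hroots).mp hdisc0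
  have hδ : ι D = ((r - s) * (r - t) * (s - t)) ^ 2 := by
    have h := Cubic.discr_eq_prod_three_roots ha hroots
    rw [hdisc] at h
    simpa [hP] using h
  set δ : K := (r - s) * (r - t) * (s - t) with hδdef
  have hδne : δ ≠ 0 := by
    intro h
    exact hD (hinj (by rw [map_zero, hδ, h]; ring))
  -- root correspondence
  have hPne : (Cubic.map ι P).toPoly ≠ 0 := Cubic.ne_zero_of_a_ne_zero (by simp [Cubic.map, hP])
  have hmem : ∀ x : ZMod p, (x ^ 3 + a * x ^ 2 + b * x + c = 0) ↔
      (ι x = r ∨ ι x = s ∨ ι x = t) := by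
    intro x
    have h1 : ι x ∈ (Cubic.map ι P).roots ↔
        (Cubic.map ι P).a * (ι x) ^ 3 + (Cubic.map ι P).b * (ι x) ^ 2 +
          (Cubic.map ι P).c * (ι x) + (Cubic.map ι P).d = 0 :=
      Cubic.mem_roots_iff hPne (ι x)
    rw [hroots] at h1
    simp only [Multiset.insert_eq_cons, Multiset.mem_cons, Multiset.mem_singleton] at h1
    rw [h1, show (Cubic.map ι P).a * (ι x) ^ 3 + (Cubic.map ι P).b * (ι x) ^ 2 +
        (Cubic.map ι P).c * (ι x) + (Cubic.map ι P).d = ι (x ^ 3 + a * x ^ 2 + b * x + c) by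
          simp [Cubic.map, hP]]
    exact (map_eq_zero_iff ι hinj).symm
  -- Frobenius sends roots to roots
  have hφ : ∀ u : K, (u = r ∨ u = s ∨ u = t) → (u ^ p = r ∨ u ^ p = s ∨ u ^ p = t) := by
    intro u hu
    have h1 : u ∈ (Cubic.map ι P).roots := by
      rw [hroots]
      simpa [Multiset.insert_eq_cons] using hu
    rw [Cubic.mem_roots_iff hPne] at h1
    have h2 : (Cubic.map ι P).a * (u ^ p) ^ 3 + (Cubic.map ι P).b * (u ^ p) ^ 2 +
        (Cubic.map ι P).c * (u ^ p) + (Cubic.map ι P).d = 0 := by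
      have h3 := congrArg (frobenius K p) h1
      simp only [map_add, map_mul, map_pow, map_zero, frobenius_def] at h3
      have hfa : ∀ y : ZMod p, (ι y) ^ p = ι y := by
        intro y; rw [← map_pow, ZMod.pow_card]
      simpa [Cubic.map, hP, hfa, ← pow_mul, mul_comm, mul_left_comm, pow_right_comm] using h3
    have h4 : u ^ p ∈ (Cubic.map ι P).roots := by
      rw [Cubic.mem_roots_iff hPne]; exact h2
    rw [hroots] at h4
    simpa [Multiset.insert_eq_cons] using h4
  have hpinj : Function.Injective fun u : K => u ^ p := by
    intro u v h
    exact frobenius_inj K p h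
  -- the finite root set
  set S : Finset (ZMod p) := Finset.univ.filter (fun x => x ^ 3 + a * x ^ 2 + b * x + c = 0)
    with hS
  have hn : Nat.card {x : ZMod p // x ^ 3 + a * x ^ 2 + b * x + c = 0} = S.card := by
    rw [Nat.card_eq_fintype_card, hS]
    exact (Fintype.card_subtype _)
  have hSmem : ∀ x, x ∈ S ↔ (ι x = r ∨ ι x = s ∨ ι x = t) := by
    intro x
    rw [hS, Finset.mem_filter]
    simp [hmem x]
  -- if a root of the cubic in K is fixed by Frobenius and there is no corresponding
  -- element of S, contradiction
  have hfix : ∀ u : K, (u = r ∨ u = s ∨ u = t) → u ^ p = u → ∃ x ∈ S, ι x = u := by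
    intro u hu hfu
    obtain ⟨x, hx⟩ := frob_fixed_mem' p hfu
    have hx' : ι x = u := hx
    exact ⟨x, (hSmem x).mpr (by rw [hx']; exact hu), hx'⟩
  have hle3 : S.card ≤ 3 := by
    have hsub : S ⊆ P.toPoly.roots.toFinset := by
      intro x hx
      rw [hS, Finset.mem_filter] at hx
      rw [Multiset.mem_toFinset, mem_roots (Cubic.ne_zero_of_a_ne_zero ha)]
      simp only [IsRoot, hP, Cubic.toPoly]
      simp only [eval_add, eval_mul, eval_pow, eval_C, eval_X, map_one, one_mul]
      linear_combination hx.2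
    exact (Finset.card_le_card hsub).trans Cubic.card_roots_le
  rw [hn]
  rcases (show S.card = 0 ∨ S.card = 1 ∨ S.card = 2 ∨ S.card = 3 by omega) with h0 | h1 | h2 | h3
  · -- no roots: Frobenius is a 3-cycle, δ is fixed, D is a square
    have hnofix : ∀ u : K, (u = r ∨ u = s ∨ u = t) → u ^ p ≠ u := by
      intro u hu hfu
      obtain ⟨x, hx, -⟩ := hfix u hu hfu
      rw [Finset.card_eq_zero] at h0
      simp [h0] at hx
    have hδp : δ ^ p = δ := by
      have hpow : δ ^ p = (r ^ p - s ^ p) * (r ^ p - t ^ p) * (s ^ p - t ^ p) := by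
        rw [hδdef, mul_pow, mul_pow, sub_pow_char, sub_pow_char, sub_pow_char]
      rcases hφ r (Or.inl rfl) with hr | hr | hr
      · exact absurd hr (hnofix r (Or.inl rfl))
      · -- r^p = s
        rcases hφ s (Or.inr (Or.inl rfl)) with hs | hs | hs
        · -- s^p = r : forces t^p impossible
          rcases hφ t (Or.inr (Or.inr rfl)) with ht | ht | ht
          · exact absurd (hpinj (ht.trans hs.symm)) hst.symm
          · exact absurd (hpinj (ht.trans hr.symm)) (fun h => hrt h.symm)
          · exact absurd ht (hnofix t (Or.inr (Or.inr rfl)))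
        · exact absurd hs (hnofix s (Or.inr (Or.inl rfl)))
        · -- s^p = t
          rcases hφ t (Or.inr (Or.inr rfl)) with ht | ht | ht
          · rw [hpow, hr, hs, ht, hδdef]; ring
          · exact absurd (hpinj (ht.trans hr.symm)) (fun h => hrt h.symm)
          · exact absurd ht (hnofix t (Or.inr (Or.inr rfl)))
      · -- r^p = t
        rcases hφ s (Or.inr (Or.inl rfl)) with hs | hs | hs
        · -- s^p = r
          rcases hφ t (Or.inr (Or.inr rfl)) with ht | ht | ht
          · exact absurd (hpinj (ht.trans hs.symm)) hst.symm
          · rw [hpow, hr, hs, ht, hδdef]; ring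
          · exact absurd ht (hnofix t (Or.inr (Or.inr rfl)))
        · exact absurd hs (hnofix s (Or.inr (Or.inl rfl)))
        · exact absurd (hpinj (hs.trans hr.symm)) hrs.symm
    obtain ⟨d, hd⟩ := frob_fixed_mem' p hδp
    rw [← hι] at hd
    have hDd : D = d ^ 2 := by
      apply hinj
      rw [hδ, map_pow, hd, hδdef]
    constructor
    · left; exact h0
    · constructor
      · intro _; omega
      · intro _; exact ⟨d, by rw [hDd]; ring⟩
  · -- exactly one root: Frobenius swaps the other two, D is not a square
    obtain ⟨x, hx⟩ := Finset.card_eq_one.mp h1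
    have hxS : x ∈ S := by rw [hx]; exact Finset.mem_singleton_self x
    have hxr := (hSmem x).mp hxS
    have hxp : (ι x) ^ p = ι x := by rw [← map_pow, ZMod.pow_card]
    have honly : ∀ u : K, (u = r ∨ u = s ∨ u = t) → u ^ p = u → u = ι x := by
      intro u hu hfu
      obtain ⟨y, hy, hyu⟩ := hfix u hu hfu
      rw [hx, Finset.mem_singleton] at hy
      rw [← hyu, hy]
    have hδp : δ ^ p = -δ := by
      have hpow : δ ^ p = (r ^ p - s ^ p) * (r ^ p - t ^ p) * (s ^ p - t ^ p) := by
        rw [hδdef, mul_pow, mul_pow, sub_pow_char, sub_pow_char, sub_pow_char]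
      rcases hxr with hxr | hxr | hxr
      · -- ι x = r ; s,t swap
        have hr : r ^ p = r := by rw [← hxr]; exact hxp
        have hs : s ^ p = t := by
          rcases hφ s (Or.inr (Or.inl rfl)) with hs | hs | hs
          · exact absurd (hpinj (hs.trans hr.symm)) hrs.symm
          · exact absurd ((honly s (Or.inr (Or.inl rfl)) hs).trans hxr) hrs.symm
          · exact hs
        have ht : t ^ p = s := by
          rcases hφ t (Or.inr (Or.inr rfl)) with ht | ht | ht
          · exact absurd (hpinj (ht.trans hr.symm)) hrt.symm
          · exact ht
          · exact absurd ((honly t (Or.inr (Or.inr rfl)) ht).trans hxr) hrt.symm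
        rw [hpow, hr, hs, ht, hδdef]; ring
      · -- ι x = s ; r,t swap
        have hs : s ^ p = s := by rw [← hxr]; exact hxp
        have hr : r ^ p = t := by
          rcases hφ r (Or.inl rfl) with hr | hr | hr
          · exact absurd ((honly r (Or.inl rfl) hr).trans hxr) hrs
          · exact absurd (hpinj (hr.trans hs.symm)) hrs
          · exact hr
        have ht : t ^ p = r := by
          rcases hφ t (Or.inr (Or.inr rfl)) with ht | ht | ht
          · exact ht
          · exact absurd (hpinj (ht.trans hs.symm)) hst.symm
          · exact absurd ((honly t (Or.inr (Or.inr rfl)) ht).trans hxr) hst.symm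
        rw [hpow, hr, hs, ht, hδdef]; ring
      · -- ι x = t ; r,s swap
        have ht : t ^ p = t := by rw [← hxr]; exact hxp
        have hr : r ^ p = s := by
          rcases hφ r (Or.inl rfl) with hr | hr | hr
          · exact absurd ((honly r (Or.inl rfl) hr).trans hxr) hrt
          · exact hr
          · exact absurd (hpinj (hr.trans ht.symm)) hrt
        have hs : s ^ p = r := by
          rcases hφ s (Or.inr (Or.inl rfl)) with hs | hs | hs
          · exact hs
          · exact absurd ((honly s (Or.inr (Or.inl rfl)) hs).trans hxr) hst
          · exact absurd (hpinj (hs.trans ht.symm)) hst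
        rw [hpow, hr, hs, ht, hδdef]; ring
    have hns : ¬ IsSquare D := by
      rintro ⟨d, hd⟩
      have h2 : (ι d - δ) * (ι d + δ) = 0 := by
        have : (ι d) ^ 2 = δ ^ 2 := by rw [← hδ, hd]; rw [map_mul]; ring
        linear_combination this
      have hfixδ : δ ^ p = δ := by
        rcases mul_eq_zero.mp h2 with h3 | h3
        · have h4 : δ = ι d := (sub_eq_zero.mp h3).symm
          rw [h4, ← map_pow, ZMod.pow_card]
        · have h4 : δ = -ι d := by linear_combination h3
          rw [h4]
          have h5 : (-ι d) ^ p = -((ι d) ^ p) := by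
            simpa [frobenius_def] using (map_neg (frobenius K p) (ι d))
          rw [h5, ← map_pow, ZMod.pow_card]
      rw [hδp] at hfixδ
      have h2δ : (2 : K) * δ = 0 := by linear_combination -hfixδ
      rcases mul_eq_zero.mp h2δ with h4 | h4
      · have : ((2 : ℕ) : K) = 0 := by exact_mod_cast h4
        have := (CharP.cast_eq_zero_iff K p 2).mp this
        have := (Nat.prime_dvd_prime_iff_eq hp Nat.prime_two).mp this
        exact hodd this
      · exact hδne h4
    refine ⟨Or.inr (Or.inl h1), ?_⟩
    constructor
    · intro hsq; exact absurd hsq hns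
    · intro hne; exact absurd h1 hne
  · -- two roots: impossible
    exfalso
    obtain ⟨x, y, hxy, hxyS⟩ := Finset.card_eq_two.mp h2
    have hxS : x ∈ S := by rw [hxyS]; simp
    have hyS : y ∈ S := by rw [hxyS]; simp
    have hιxy : ι x ≠ ι y := fun h => hxy (hinj h)
    have hsum : ι a = -(r + s + t) := by
      have h := Cubic.b_eq_three_roots ha hroots
      simpa [hP] using h
    set z : ZMod p := -a - x - y with hz
    have hιz : ι z = r + s + t - ι x - ι y := by
      rw [hz, map_sub, map_sub, map_neg, hsum]; ring
    have hzroot : ι z = r ∨ ι z = s ∨ ι z = t := by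
      rcases (hSmem x).mp hxS with hx' | hx' | hx' <;>
        rcases (hSmem y).mp hyS with hy' | hy' | hy' <;>
          first
          | exact absurd (hx'.trans hy'.symm) hιxy
          | (rw [hιz, hx', hy'];
             first
              | (left; ring1)
              | (right; left; ring1)
              | (right; right; ring1))
    have hzS : z ∈ S := (hSmem z).mpr hzroot
    rw [hxyS] at hzS
    rcases Finset.mem_insert.mp hzS with hzx | hzy
    · rcases (hSmem x).mp hxS with hx' | hx' | hx' <;>
        rcases (hSmem y).mp hyS with hy' | hy' | hy' <;>
          first
          | exact absurd (hx'.trans hy'.symm) hιxy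
          | (apply_fun ι at hzx; rw [hιz, hx', hy'] at hzx;
             first
             | exact hrs (by linear_combination hzx)
             | exact hrt (by linear_combination hzx)
             | exact hst (by linear_combination hzx)
             | exact hrs (by linear_combination -hzx)
             | exact hrt (by linear_combination -hzx)
             | exact hst (by linear_combination -hzx))
    · rw [Finset.mem_singleton] at hzy
      rcases (hSmem x).mp hxS with hx' | hx' | hx' <;>
        rcases (hSmem y).mp hyS with hy' | hy' | hy' <;>
          first
          | exact absurd (hx'.trans hy'.symm) hιxy
          | (apply_fun ι at hzy; rw [hιz, hx', hy'] at hzy;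
             first
             | exact hrs (by linear_combination hzy)
             | exact hrt (by linear_combination hzy)
             | exact hst (by linear_combination hzy)
             | exact hrs (by linear_combination -hzy)
             | exact hrt (by linear_combination -hzy)
             | exact hst (by linear_combination -hzy))
  · -- three roots: D is a square in ZMod p
    obtain ⟨x, y, z, hxy, hxz, hyz, hxyz⟩ := Finset.card_eq_three.mp h3
    have hroot : ∀ w ∈ S, P.toPoly.IsRoot w := by
      intro w hw
      rw [hS, Finset.mem_filter] at hw
      simp only [IsRoot, hP, Cubic.toPoly]
      simp only [eval_add, eval_mul, eval_pow, eval_C, eval_X, map_one, one_mul]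
      linear_combination hw.2
    have hP0 : P.toPoly ≠ 0 := Cubic.ne_zero_of_a_ne_zero ha
    have hle : ({x, y, z} : Multiset (ZMod p)) ≤ P.toPoly.roots := by
      rw [Multiset.le_iff_count]
      intro e
      by_cases he : e ∈ ({x, y, z} : Multiset (ZMod p))
      · have h1 : Multiset.count e ({x, y, z} : Multiset (ZMod p)) = 1 := by
          have hnd : ({x, y, z} : Multiset (ZMod p)).Nodup := by
            simp [hxy, hxz, hyz]
          exact Multiset.count_eq_one_of_mem hnd he
        rw [h1]
        rw [Multiset.one_le_count_iff_mem, mem_roots hP0]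
        simp only [Multiset.insert_eq_cons, Multiset.mem_cons, Multiset.mem_singleton] at he
        rcases he with rfl | rfl | rfl <;>
          exact hroot _ (by rw [hxyz]; simp)
      · rw [Multiset.count_eq_zero_of_notMem he]; omega
    have hcard : Multiset.card P.toPoly.roots ≤ 3 := by
      refine (Polynomial.card_roots' _).trans ?_
      rw [Cubic.natDegree_of_a_ne_zero ha]
    have heq : P.toPoly.roots = ({x, y, z} : Multiset (ZMod p)) := by
      symm
      apply Multiset.eq_of_le_of_card_le hle
      simpa using hcard
    have hroots' : (Cubic.map (RingHom.id (ZMod p)) P).roots = {x, y, z} := by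
      rw [Cubic.map_roots, Polynomial.map_id]
      exact heq
    have hsq := Cubic.discr_eq_prod_three_roots ha hroots'
    simp only [RingHom.id_apply, hP] at hsq
    rw [hdisc] at hsq
    refine ⟨Or.inr (Or.inr h3), ?_⟩
    constructor
    · intro _; omega
    · intro _
      exact ⟨1 * 1 * (x - y) * (x - z) * (y - z), by rw [hsq]; ring⟩
end

section
/- Let Δ₊ and Δ₋ be coprime odd positive integers, let ε ∈ {1, −1}, and set Δ = ε·Δ₊·Δ₋. Let m be a positive squarefree integer with m ≡ 3 (mod 4) and gcd(m, Δ) = 1. Assume: (i) for every prime l dividing Δ₊, the Legendre symbol (m/l) = 1; (ii) for every prime q dividing Δ₋, the Legendre symbol (m/q) = −1. Then the Jacobi symbol (Δ/m) equals (−1)^{Ω(Δ₋)} if Δ ≡ 1 (mod 4), and equals (−1)^{Ω(Δ₋)+1} if Δ ≡ 3 (mod 4), where Ω(Δ₋) is the number of prime factors of Δ₋ counted with multiplicity. -/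
open NumberTheorySymbols

lemma jac_pow_aux (a : ℤ) (n : ℕ) (c : ℤ)
    (h : ∀ p : ℕ, (hp : p.Prime) → p ∣ n → @legendreSym p ⟨hp⟩ a = c) :
    jacobiSym a n = c ^ n.primeFactorsList.length := by
  unfold jacobiSym
  rw [← List.length_pmap (f := fun p (pp : p.Prime) => @legendreSym p ⟨pp⟩ a)
    (H := fun _ pf => Nat.prime_of_mem_primeFactorsList pf)]
  refine List.prod_eq_pow_card _ c fun x hx => ?_
  obtain ⟨p, hmem, rfl⟩ := List.mem_pmap.mp hx
  exact h p (Nat.prime_of_mem_primeFactorsList hmem) (Nat.dvd_of_mem_primeFactorsList hmem)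

/-- Quadratic-reciprocity computation of the Jacobi symbol `(Δ/m)` for `Δ = ε·Δ₊·Δ₋` with
`Δ₊, Δ₋` odd, and `m ≡ 3 (mod 4)` squarefree, where `m` is a square mod every prime factor
of `Δ₊` and a non-square mod every prime factor of `Δ₋`. Then `(Δ/m) = (−1)^{Ω(Δ₋)}` if
`Δ ≡ 1 (mod 4)` and `(Δ/m) = (−1)^{Ω(Δ₋)+1}` if `Δ ≡ 3 (mod 4)`. -/
theorem jacobiSym_eq_of_modified_heegner_three_mod_four
    (Δp Δm : ℕ) (hΔp : 0 < Δp) (hΔm : 0 < Δm) (hΔpodd : Odd Δp) (hΔmodd : Odd Δm)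
    (hcop : Nat.Coprime Δp Δm)
    (ε : ℤ) (hε : ε = 1 ∨ ε = -1)
    (m : ℕ) (hm : 0 < m) (hsf : Squarefree m) (hm4 : m % 4 = 3)
    (hgcd : IsCoprime (m : ℤ) (ε * Δp * Δm))
    (hplus : ∀ l : ℕ, (hl : l.Prime) → l ∣ Δp → @legendreSym l ⟨hl⟩ (m : ℤ) = 1)
    (hminus : ∀ q : ℕ, (hq : q.Prime) → q ∣ Δm → @legendreSym q ⟨hq⟩ (m : ℤ) = -1) :
    ((ε * Δp * Δm) ≡ 1 [ZMOD 4] →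
      jacobiSym (ε * Δp * Δm) m = (-1) ^ Δm.primeFactorsList.length) ∧
    ((ε * Δp * Δm) ≡ 3 [ZMOD 4] →
      jacobiSym (ε * Δp * Δm) m = (-1) ^ (Δm.primeFactorsList.length + 1)) := by
  have hm2 : m % 2 = 1 := by omega
  have hmodd : Odd m := Nat.odd_iff.mpr hm2
  have hp2 : Δp % 2 = 1 := Nat.odd_iff.mp hΔpodd
  have hq2 : Δm % 2 = 1 := Nat.odd_iff.mp hΔmodd
  have hJp : jacobiSym (m : ℤ) Δp = 1 := by
    rw [jac_pow_aux (m : ℤ) Δp 1 hplus, one_pow]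
  have hJm : jacobiSym (m : ℤ) Δm = (-1) ^ Δm.primeFactorsList.length :=
    jac_pow_aux (m : ℤ) Δm (-1) hminus
  have sgnp : jacobiSym (Δp : ℤ) m = if Δp % 4 = 3 then -1 else 1 := by
    rw [← jacobiSym.quadratic_reciprocity_if hp2 hm2]
    simp only [hJp, hm4, and_true]
  have sgnm : jacobiSym (Δm : ℤ) m
      = (if Δm % 4 = 3 then -1 else 1) * (-1) ^ Δm.primeFactorsList.length := by
    rw [← jacobiSym.quadratic_reciprocity_if hq2 hm2]
    simp only [hJm, hm4, and_true]
    split_ifs <;> ring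
  have hε' : jacobiSym ε m = ε := by
    rcases hε with rfl | rfl
    · exact jacobiSym.one_left m
    · rw [jacobiSym.at_neg_one hmodd, ZMod.χ₄_nat_three_mod_four hm4]
  set s : ℤ := ε * (if Δp % 4 = 3 then -1 else 1) * (if Δm % 4 = 3 then -1 else 1) with hs_def
  have hmul : jacobiSym (ε * Δp * Δm) m = s * (-1) ^ Δm.primeFactorsList.length := by
    rw [jacobiSym.mul_left, jacobiSym.mul_left, hε', sgnp, sgnm, hs_def]
    ring
  have hs : s = 1 ∨ s = -1 := by
    rcases hε with rfl | rfl <;> simp only [hs_def] <;> split_ifs <;> norm_num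
  have cΔp : (Δp : ℤ) ≡ (if Δp % 4 = 3 then -1 else 1) [ZMOD 4] := by
    have h4 : Δp % 4 = 1 ∨ Δp % 4 = 3 := by omega
    simp only [Int.ModEq]
    rcases h4 with h | h <;> simp [h] <;> omega
  have cΔm : (Δm : ℤ) ≡ (if Δm % 4 = 3 then -1 else 1) [ZMOD 4] := by
    have h4 : Δm % 4 = 1 ∨ Δm % 4 = 3 := by omega
    simp only [Int.ModEq]
    rcases h4 with h | h <;> simp [h] <;> omega
  have hcong : (ε * Δp * Δm : ℤ) ≡ s [ZMOD 4] :=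
    ((Int.ModEq.refl ε).mul cΔp).mul cΔm
  constructor
  · intro h1
    have hcs : s ≡ 1 [ZMOD 4] := hcong.symm.trans h1
    have hs1 : s = 1 := by
      rcases hs with h | h
      · exact h
      · exfalso; rw [h] at hcs; revert hcs; decide
    rw [hmul, hs1, one_mul]
  · intro h3
    have hcs : s ≡ 3 [ZMOD 4] := hcong.symm.trans h3
    have hs1 : s = -1 := by
      rcases hs with h | h
      · exfalso; rw [h] at hcs; revert hcs; decide
      · exact h
    rw [hmul, hs1, pow_succ]
    ring
end

section
/- Let Δ₊ and Δ₋ be coprime odd positive integers, let ε ∈ {1, −1}, and set Δ = ε·Δ₊·Δ₋. Let m be an odd positive squarefree integer with gcd(m, Δ) = 1. Assume: (i) for every prime l dividing Δ₊, the Legendre symbol (2m/l) = 1; (ii) for every prime q dividing Δ₋, the Legendre symbol (2m/q) = −1. Set b = Ω(Δ₋), the number of prime factors of Δ₋ counted with multiplicity. Then the Jacobi symbol (Δ/m) equals (−1)^b if either Δ ≡ 1 (mod 8), or Δ ≡ 3 (mod 8) and m ≡ 3 (mod 4), or Δ ≡ 7 (mod 8) and m ≡ 1 (mod 4); and (Δ/m)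 equals (−1)^{b+1} if either Δ ≡ 5 (mod 8), or Δ ≡ 3 (mod 8) and m ≡ 1 (mod 4), or Δ ≡ 7 (mod 8) and m ≡ 3 (mod 4). -/
open NumberTheorySymbols

private lemma jacobi_eq_pow_aux (a c : ℤ) (n : ℕ)
    (h : ∀ p : ℕ, (hp : p.Prime) → p ∣ n → @legendreSym p ⟨hp⟩ a = c) :
    jacobiSym a n = c ^ n.primeFactorsList.length := by
  rw [jacobiSym, ← List.length_pmap (f := fun p pp => @legendreSym p ⟨pp⟩ a)
      (H := fun _ pf => Nat.prime_of_mem_primeFactorsList pf)]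
  apply List.prod_eq_pow_card
  intro x hx
  rcases List.mem_pmap.mp hx with ⟨p, hp, rfl⟩
  exact h p (Nat.prime_of_mem_primeFactorsList hp) (Nat.dvd_of_mem_primeFactorsList hp)

private lemma sign_helper (ε : ℤ) (hε : ε = 1 ∨ ε = -1) (N m : ℕ)
    (hN : N % 2 = 1) (hm : m % 2 = 1) (E : ℤ)
    (hE : (ε = 1 ∧ E = 1) ∨ (ε = -1 ∧ E = if m % 4 = 1 then 1 else -1)) :
    (((ε * N ≡ 1 [ZMOD 8]) ∨ ((ε * N ≡ 3 [ZMOD 8]) ∧ m % 4 = 3) ∨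
        ((ε * N ≡ 7 [ZMOD 8]) ∧ m % 4 = 1)) →
      E * (-1 : ℤ) ^ (N / 2 * (m / 2)) *
        (if N % 8 = 1 ∨ N % 8 = 7 then (1 : ℤ) else -1) = 1) ∧
    (((ε * N ≡ 5 [ZMOD 8]) ∨ ((ε * N ≡ 3 [ZMOD 8]) ∧ m % 4 = 1) ∨
        ((ε * N ≡ 7 [ZMOD 8]) ∧ m % 4 = 3)) →
      E * (-1 : ℤ) ^ (N / 2 * (m / 2)) *
        (if N % 8 = 1 ∨ N % 8 = 7 then (1 : ℤ) else -1) = -1) := by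
  have hpow : ((-1 : ℤ)) ^ (N / 2 * (m / 2)) =
      if N % 4 = 3 ∧ m % 4 = 3 then -1 else 1 := by
    by_cases h : N % 4 = 3 ∧ m % 4 = 3
    · rw [if_pos h, Odd.neg_one_pow]
      exact Nat.odd_mul.mpr ⟨Nat.odd_iff.mpr (by omega), Nat.odd_iff.mpr (by omega)⟩
    · rw [if_neg h, Even.neg_one_pow]
      rw [Nat.even_mul]
      have h1 : N % 4 = 1 ∨ m % 4 = 1 := by omega
      rcases h1 with h1 | h1
      · exact Or.inl (Nat.even_iff.mpr (by omega))
      · exact Or.inr (Nat.even_iff.mpr (by omega))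
  have hcast : ((N : ℤ)) % 8 = ((N % 8 : ℕ) : ℤ) := by push_cast; omega
  rw [hpow]
  rcases hE with ⟨rfl, rfl⟩ | ⟨rfl, rfl⟩
  · constructor
    · rintro (h | ⟨h, hm4⟩ | ⟨h, hm4⟩) <;> replace h : (1 * (N : ℤ)) % 8 = _ % 8 := h
      · norm_num [show N % 8 = 1 by omega, show N % 4 = 1 by omega]
      · norm_num [show N % 8 = 3 by omega, show N % 4 = 3 by omega, hm4]
      · norm_num [show N % 8 = 7 by omega, show N % 4 = 3 by omega, hm4]
    · rintro (h | ⟨h, hm4⟩ | ⟨h, hm4⟩) <;> replace h : (1 * (N : ℤ)) % 8 = _ % 8 := h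
      · norm_num [show N % 8 = 5 by omega, show N % 4 = 1 by omega]
      · norm_num [show N % 8 = 3 by omega, show N % 4 = 3 by omega, hm4]
      · norm_num [show N % 8 = 7 by omega, show N % 4 = 3 by omega, hm4]
  · constructor
    · rintro (h | ⟨h, hm4⟩ | ⟨h, hm4⟩) <;> replace h : (-1 * (N : ℤ)) % 8 = _ % 8 := h
      · rcases (show m % 4 = 1 ∨ m % 4 = 3 by omega) with hm4 | hm4 <;>
          norm_num [show N % 8 = 7 by omega, show N % 4 = 3 by omega, hm4]
      · norm_num [show N % 8 = 5 by omega, show N % 4 = 1 by omega, hm4]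
      · norm_num [show N % 8 = 1 by omega, show N % 4 = 1 by omega, hm4]
    · rintro (h | ⟨h, hm4⟩ | ⟨h, hm4⟩) <;> replace h : (-1 * (N : ℤ)) % 8 = _ % 8 := h
      · rcases (show m % 4 = 1 ∨ m % 4 = 3 by omega) with hm4 | hm4 <;>
          norm_num [show N % 8 = 3 by omega, show N % 4 = 3 by omega, hm4]
      · norm_num [show N % 8 = 5 by omega, show N % 4 = 1 by omega, hm4]
      · norm_num [show N % 8 = 1 by omega, show N % 4 = 1 by omega, hm4]

/-- Quadratic-reciprocity computation of the Jacobi symbol `(Δ/m)` for `Δ = ε·Δ₊·Δ₋` with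
`Δ₊, Δ₋` odd, and `m` odd positive squarefree, where `2m` is a square mod every prime
factor of `Δ₊` and a non-square mod every prime factor of `Δ₋`. With `b = Ω(Δ₋)`:
`(Δ/m) = (−1)^b` if `Δ ≡ 1 (mod 8)`, or `Δ ≡ 3 (mod 8)` and `m ≡ 3 (mod 4)`, or
`Δ ≡ 7 (mod 8)` and `m ≡ 1 (mod 4)`; and `(Δ/m) = (−1)^{b+1}` if `Δ ≡ 5 (mod 8)`, or
`Δ ≡ 3 (mod 8)` and `m ≡ 1 (mod 4)`, or `Δ ≡ 7 (mod 8)` and `m ≡ 3 (mod 4)`. -/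
theorem jacobiSym_eq_of_modified_heegner_even_case
    (Δp Δm : ℕ) (hΔp : 0 < Δp) (hΔm : 0 < Δm) (hΔpodd : Odd Δp) (hΔmodd : Odd Δm)
    (hcop : Nat.Coprime Δp Δm)
    (ε : ℤ) (hε : ε = 1 ∨ ε = -1)
    (m : ℕ) (hm : 0 < m) (hmodd : Odd m) (hsf : Squarefree m)
    (hgcd : IsCoprime (m : ℤ) (ε * Δp * Δm))
    (hplus : ∀ l : ℕ, (hl : l.Prime) → l ∣ Δp → @legendreSym l ⟨hl⟩ (2 * m : ℤ) = 1)
    (hminus : ∀ q : ℕ, (hq : q.Prime) → q ∣ Δm → @legendreSym q ⟨hq⟩ (2 * m : ℤ) = -1) :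
    (((ε * Δp * Δm) ≡ 1 [ZMOD 8] ∨
        ((ε * Δp * Δm) ≡ 3 [ZMOD 8] ∧ m % 4 = 3) ∨
        ((ε * Δp * Δm) ≡ 7 [ZMOD 8] ∧ m % 4 = 1)) →
      jacobiSym (ε * Δp * Δm) m = (-1) ^ Δm.primeFactorsList.length) ∧
    (((ε * Δp * Δm) ≡ 5 [ZMOD 8] ∨
        ((ε * Δp * Δm) ≡ 3 [ZMOD 8] ∧ m % 4 = 1) ∨
        ((ε * Δp * Δm) ≡ 7 [ZMOD 8] ∧ m % 4 = 3)) →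
      jacobiSym (ε * Δp * Δm) m = (-1) ^ (Δm.primeFactorsList.length + 1)) := by
  haveI : NeZero Δp := ⟨hΔp.ne'⟩
  haveI : NeZero Δm := ⟨hΔm.ne'⟩
  set N := Δp * Δm with hNdef
  set b := Δm.primeFactorsList.length with hbdef
  have hNodd : Odd N := hΔpodd.mul hΔmodd
  have hN2 : N % 2 = 1 := Nat.odd_iff.mp hNodd
  have hm2 : m % 2 = 1 := Nat.odd_iff.mp hmodd
  have hΔp2 : Δp % 2 = 1 := Nat.odd_iff.mp hΔpodd
  have hΔm2 : Δm % 2 = 1 := Nat.odd_iff.mp hΔmodd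
  -- gcd facts for `2`
  have g2p : Int.gcd 2 (Δp : ℤ) = 1 := by
    rw [show ((2 : ℤ)) = ((2 : ℕ) : ℤ) by norm_num, Int.gcd_natCast_natCast]
    exact hΔpodd.coprime_two_left
  have g2m : Int.gcd 2 (Δm : ℤ) = 1 := by
    rw [show ((2 : ℤ)) = ((2 : ℕ) : ℤ) by norm_num, Int.gcd_natCast_natCast]
    exact hΔmodd.coprime_two_left
  -- `J(m | Δp) = χ₈ Δp`
  have h2p : J(2 | Δp) = ZMod.χ₈ (Δp : ZMod 8) := jacobiSym.at_two hΔpodd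
  have h2m : J(2 | Δm) = ZMod.χ₈ (Δm : ZMod 8) := jacobiSym.at_two hΔmodd
  have h1p : J(2 * (m : ℤ) | Δp) = 1 := by
    rw [jacobi_eq_pow_aux _ 1 _ hplus, one_pow]
  have h1m : J(2 * (m : ℤ) | Δm) = (-1) ^ b := jacobi_eq_pow_aux _ (-1) _ hminus
  have hmp : J((m : ℤ) | Δp) = ZMod.χ₈ (Δp : ZMod 8) := by
    calc J((m : ℤ) | Δp) = J(2 | Δp) ^ 2 * J((m : ℤ) | Δp) := by
          rw [jacobiSym.sq_one g2p, one_mul]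
      _ = J(2 | Δp) * (J(2 | Δp) * J((m : ℤ) | Δp)) := by ring
      _ = J(2 | Δp) * J(2 * (m : ℤ) | Δp) := by rw [jacobiSym.mul_left]
      _ = ZMod.χ₈ (Δp : ZMod 8) := by rw [h1p, h2p, mul_one]
  have hmm : J((m : ℤ) | Δm) = (-1) ^ b * ZMod.χ₈ (Δm : ZMod 8) := by
    calc J((m : ℤ) | Δm) = J(2 | Δm) ^ 2 * J((m : ℤ) | Δm) := by
          rw [jacobiSym.sq_one g2m, one_mul]
      _ = J(2 | Δm) * (J(2 | Δm) * J((m : ℤ) | Δm)) := by ring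
      _ = J(2 | Δm) * J(2 * (m : ℤ) | Δm) := by rw [jacobiSym.mul_left]
      _ = (-1) ^ b * ZMod.χ₈ (Δm : ZMod 8) := by rw [h1m, h2m]; ring
  have hchi : ZMod.χ₈ (Δp : ZMod 8) * ZMod.χ₈ (Δm : ZMod 8) = ZMod.χ₈ (N : ZMod 8) := by
    rw [← map_mul, hNdef]; push_cast; ring_nf
  have hC : ZMod.χ₈ (N : ZMod 8) = if N % 8 = 1 ∨ N % 8 = 7 then (1 : ℤ) else -1 := by
    rw [ZMod.χ₈_nat_eq_if_mod_eight, if_neg (by omega)]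
  have hrw : (ε * Δp * Δm : ℤ) = ε * (N : ℤ) := by push_cast [hNdef]; ring
  have key : jacobiSym (ε * Δp * Δm) m =
      J(ε | m) * (-1 : ℤ) ^ (N / 2 * (m / 2)) *
        (if N % 8 = 1 ∨ N % 8 = 7 then (1 : ℤ) else -1) * (-1) ^ b := by
    calc jacobiSym (ε * Δp * Δm) m = J(ε | m) * J((N : ℤ) | m) := by
          rw [hrw, jacobiSym.mul_left]
      _ = J(ε | m) * ((-1) ^ (N / 2 * (m / 2)) * J((m : ℤ) | N)) := by
          rw [jacobiSym.quadratic_reciprocity hNodd hmodd]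
      _ = J(ε | m) * ((-1) ^ (N / 2 * (m / 2)) * (J((m : ℤ) | Δp) * J((m : ℤ) | Δm))) := by
          rw [hNdef, jacobiSym.mul_right]
      _ = _ := by rw [hmp, hmm, ← hC, ← hchi]; ring
  have hE : (ε = 1 ∧ J(ε | m) = 1) ∨
      (ε = -1 ∧ J(ε | m) = if m % 4 = 1 then 1 else -1) := by
    rcases hε with rfl | rfl
    · exact Or.inl ⟨rfl, jacobiSym.one_left m⟩
    · refine Or.inr ⟨rfl, ?_⟩
      rw [jacobiSym.at_neg_one hmodd, ZMod.χ₄_nat_eq_if_mod_four, if_neg (by omega)]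
  obtain ⟨P1, P2⟩ := sign_helper ε hε N m hN2 hm2 (J(ε | m)) hE
  constructor
  · intro hcase
    rw [hrw] at hcase
    have h1 := P1 hcase
    rw [key]
    linear_combination ((-1 : ℤ)) ^ b * h1
  · intro hcase
    rw [hrw] at hcase
    have h2 := P2 hcase
    rw [key, pow_succ]
    linear_combination ((-1 : ℤ)) ^ b * h2
end
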